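/- Assume the storage-related KKT conditions hold, u > 0, c^u = Σ_{h=0}^{n−1} τ_h, and the set Z = {h : s_h = 0} of hours with zero stored energy is nonempty. Enumerate Z cyclically as z_1, z_2, …, z_K, and define the k-th charge/discharge cycle to be the cyclic interval of hours z_k + 1, z_k + 2, …, z_{k+1} (indices mod n, with z_{K+1} = z_1). Then Ω is nondecreasing along each cycle, and the marginal value of storage energy capacity decomposes over cycles as c^u = Σ_{k=1}^{K} (max_{h ∈ cycle k} Ω_h − min_{h ∈ cycle k} Ω_h) = Σ_{k=1}^{K} (Ω_{z_{k+1}} − Ω_{z_k + 1}), i.e., the value of each cycle collapses to the difference of the two boundary values of Ω. -/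

import Mathlib

open Fin.NatCast

/-!
STATEMENT 5: Under the storage-related KKT conditions (hours indexed
cyclically by `Fin n`), with `u > 0`, `c^u = Σ_h τ_h`, and the set
`Z = {h : s h = 0}` nonempty, enumerate `Z` cyclically as `z 0, …, z K`
(a strictly monotone enumeration of the zero-hours).  The `k`-th
charge/discharge cycle is the cyclic interval of hours
`z k + 1, z k + 2, …, z (k+1)` (indices mod `n`, wrapping from the last
zero back to the first).  Then `Ω` is nondecreasing along each cycle, and
`c^u = Σ_k (max_{cycle k} Ω - min_{cycle k} Ω)
     = Σ_k (Ω (z (k+1)) - Ω (z k + 1))`.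
-/

/-- Cyclic length of the `k`-th charge/discharge cycle: the number of hours
from `z k` (exclusive) forward to `z (k+1)` (inclusive), a value in
`{1,…,n}` (equal to `n` when there is a single zero-hour). -/
def cycLen (n K : ℕ) (z : Fin (K + 1) → Fin n) (k : Fin (K + 1)) : ℕ :=
  ((z (k + 1)).val + n - (z k).val - 1) % n + 1

/-- The `k`-th charge/discharge cycle: the cyclic interval of hours
`z k + 1, …, z (k+1)`. -/
def cycle (n K : ℕ) [NeZero n] (z : Fin (K + 1) → Fin n) (k : Fin (K + 1)) :
    Finset (Fin n) :=
  (Finset.Icc 1 (cycLen n K z k)).image fun i : ℕ => z k + (i : Fin n)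

theorem cycle_nonempty (n K : ℕ) [NeZero n] (z : Fin (K + 1) → Fin n)
    (k : Fin (K + 1)) : (cycle n K z k).Nonempty := by
  unfold cycle cycLen
  exact Finset.Nonempty.image (Finset.nonempty_Icc.mpr (Nat.le_add_left 1 _)) _

lemma modAdd (n a b : ℕ) (ha : a < n) (hb : b < n) :
    (a + ((b + n - a - 1) % n + 1)) % n = b := by
  have h1 : (a + ((b + n - a - 1) % n + 1)) % n
      = ((a + 1) + (b + n - a - 1) % n) % n := by ring_nf
  rw [h1, Nat.add_mod_mod]
  have h2 : a + 1 + (b + n - a - 1) = b + n := by omega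
  rw [h2, Nat.add_mod_right, Nat.mod_eq_of_lt hb]

theorem storage_marginal_value_cycle_decomposition
    {n : ℕ} [NeZero n]
    (u cu : ℝ) (s τ Ω β : Fin n → ℝ)
    -- (i) stationarity in s_h
    (hstat : ∀ h : Fin n, Ω h - Ω (h + 1) + τ h = β h)
    -- (ii) nonnegativity and complementary slackness for β (duals of s_h ≥ 0)
    (hβ_nonneg : ∀ h, 0 ≤ β h)
    (hβ_cs : ∀ h, β h * s h = 0)
    -- (iii) nonnegativity and complementary slackness for τ (duals of s_h ≤ u)
    (hτ_nonneg : ∀ h, 0 ≤ τ h)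
    (hτ_cs : ∀ h, τ h * (u - s h) = 0)
    -- (iv) primal feasibility 0 ≤ s_h ≤ u
    (hs_nonneg : ∀ h, 0 ≤ s h)
    (hs_le : ∀ h, s h ≤ u)
    -- u > 0 and stationarity in u at u > 0
    (hu : 0 < u)
    (hcu : cu = ∑ h : Fin n, τ h)
    -- the (nonempty) set of zero-stored-energy hours, enumerated cyclically
    (K : ℕ) (z : Fin (K + 1) → Fin n)
    (hz_mono : StrictMono z)
    (hz_enum : ∀ h : Fin n, s h = 0 ↔ ∃ k : Fin (K + 1), z k = h) :
    -- Ω is nondecreasing along each cycle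
    (∀ k : Fin (K + 1), ∀ i j : ℕ, 1 ≤ i → i ≤ j → j ≤ cycLen n K z k →
        Ω (z k + (i : Fin n)) ≤ Ω (z k + (j : Fin n))) ∧
    -- the marginal value decomposes over cycles ...
    cu = (∑ k : Fin (K + 1),
        ((cycle n K z k).sup' (cycle_nonempty n K z k) Ω
          - (cycle n K z k).inf' (cycle_nonempty n K z k) Ω)) ∧
    -- ... and each cycle's value collapses to its two boundary values of Ω
    cu = ∑ k : Fin (K + 1), (Ω (z (k + 1)) - Ω (z k + 1)) := by
  have hβ0 : ∀ h : Fin n, s h ≠ 0 → β h = 0 := by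
    intro h hs
    rcases mul_eq_zero.1 (hβ_cs h) with h' | h'
    · exact h'
    · exact absurd h' hs
  have hsz : ∀ k, s (z k) = 0 := fun k => (hz_enum (z k)).2 ⟨k, rfl⟩
  have hτz : ∀ k, τ (z k) = 0 := by
    intro k
    rcases mul_eq_zero.1 (hτ_cs (z k)) with h' | h'
    · exact h'
    · rw [hsz k] at h'; linarith
  -- z k + cycLen = z (k+1)
  have hzL : ∀ k : Fin (K + 1), z k + ((cycLen n K z k : ℕ) : Fin n) = z (k + 1) := by
    intro k
    apply Fin.ext
    rw [Fin.val_add, Fin.val_natCast, Nat.add_mod_mod]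
    exact modAdd n (z k).val (z (k+1)).val (z k).isLt (z (k+1)).isLt
  -- interior hours of each cycle have positive storage
  have hint : ∀ k : Fin (K+1), ∀ i : ℕ, 1 ≤ i → i < cycLen n K z k →
      s (z k + (i : Fin n)) ≠ 0 := by
    intro k i h1 h2 hs0
    obtain ⟨m, hm⟩ := (hz_enum _).1 hs0
    have ha : (z k).val < n := (z k).isLt
    have hb : (z (k+1)).val < n := (z (k+1)).isLt
    have hval : (z k + (i : Fin n)).val = ((z k).val + i) % n := by
      rw [Fin.val_add, Fin.val_natCast, Nat.add_mod_mod]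
    by_cases hk : k.val < K
    · -- non-wrap case : z k < z (k+1)
      have hk1 : (k + 1).val = k.val + 1 :=
        Fin.val_add_one_of_lt (by rw [Fin.lt_def, Fin.val_last]; exact hk)
      have hab : z k < z (k+1) := hz_mono (by rw [Fin.lt_def, hk1]; omega)
      have hab' : (z k).val < (z (k+1)).val := hab
      have hLval : cycLen n K z k = (z (k+1)).val - (z k).val := by
        unfold cycLen
        have he : (z (k+1)).val + n - (z k).val - 1 = ((z (k+1)).val - (z k).val - 1) + n := by
          omega
        rw [he, Nat.add_mod_right, Nat.mod_eq_of_lt (by omega)]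
        omega
      rw [hLval] at h2
      have hc : (z k + (i : Fin n)).val = (z k).val + i := by
        rw [hval, Nat.mod_eq_of_lt (by omega)]
      rcases le_or_gt m k with hmk | hmk
      · have := hz_mono.monotone hmk
        rw [Fin.le_def] at this
        rw [hm] at this
        omega
      · have hk1m : k + 1 ≤ m := by
          rw [Fin.le_def, hk1]
          rw [Fin.lt_def] at hmk
          omega
        have := hz_mono.monotone hk1m
        rw [Fin.le_def] at this
        rw [hm] at this
        omega
    · -- wrap case : k = last
      have hkl : k = Fin.last K := by
        apply Fin.ext
        simp [Fin.val_last]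
        omega
      have hk10 : k + 1 = 0 := by rw [hkl]; exact Fin.last_add_one K
      have hba : (z (k+1)).val ≤ (z k).val := by
        have : z (k+1) ≤ z k := by
          rw [hk10, hkl]
          exact hz_mono.monotone (Fin.zero_le _)
        exact this
      have hLval : cycLen n K z k = (z (k+1)).val + n - (z k).val := by
        unfold cycLen
        rw [Nat.mod_eq_of_lt (by omega)]
        omega
      rw [hLval] at h2
      by_cases hsm : (z k).val + i < n
      · have hc : (z k + (i : Fin n)).val = (z k).val + i := by
          rw [hval, Nat.mod_eq_of_lt hsm]
        have hmax : z m ≤ z k := by rw [hkl]; exact hz_mono.monotone (Fin.le_last m)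
        rw [Fin.le_def, hm] at hmax
        omega
      · have hc : (z k + (i : Fin n)).val = (z k).val + i - n := by
          rw [hval]
          have he : (z k).val + i = ((z k).val + i - n) + n := by omega
          rw [he, Nat.add_mod_right, Nat.mod_eq_of_lt (by omega)]
          omega
        have hmin : z (k+1) ≤ z m := by rw [hk10]; exact hz_mono.monotone (Fin.zero_le m)
        rw [Fin.le_def, hm] at hmin
        omega
  -- one-step identity along cycle interiors
  have hstep : ∀ k : Fin (K+1), ∀ i : ℕ, 1 ≤ i → i < cycLen n K z k →
      Ω (z k + ((i + 1 : ℕ) : Fin n)) = Ω (z k + (i : Fin n)) + τ (z k + (i : Fin n)) := by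
    intro k i h1 h2
    have hβ := hβ0 _ (hint k i h1 h2)
    have hst := hstat (z k + (i : Fin n))
    rw [hβ] at hst
    have hcast : z k + ((i + 1 : ℕ) : Fin n) = (z k + (i : Fin n)) + 1 := by
      push_cast
      rw [add_assoc]
    rw [hcast]
    linarith
  -- Ω nondecreasing along each cycle
  have hmono : ∀ k : Fin (K+1), ∀ i j : ℕ, 1 ≤ i → i ≤ j → j ≤ cycLen n K z k →
      Ω (z k + (i : Fin n)) ≤ Ω (z k + (j : Fin n)) := by
    intro k i j h1 hij hj
    induction j, hij using Nat.le_induction with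
    | base => exact le_rfl
    | succ j hij ih =>
      have hjL : j < cycLen n K z k := by omega
      have := hstep k j (by omega) hjL
      have hτn := hτ_nonneg (z k + (j : Fin n))
      have hih := ih (by omega)
      rw [this]
      linarith
  have hLpos : ∀ k : Fin (K+1), 1 ≤ cycLen n K z k := fun k => Nat.le_add_left 1 _
  -- sup and inf of Ω on each cycle
  have hmem : ∀ k : Fin (K+1), ∀ i : ℕ, 1 ≤ i → i ≤ cycLen n K z k →
      z k + (i : Fin n) ∈ cycle n K z k := by
    intro k i h1 h2
    exact Finset.mem_image.2 ⟨i, Finset.mem_Icc.2 ⟨h1, h2⟩, rfl⟩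
  have hsup : ∀ k : Fin (K+1),
      (cycle n K z k).sup' (cycle_nonempty n K z k) Ω = Ω (z (k + 1)) := by
    intro k
    apply le_antisymm
    · apply Finset.sup'_le
      intro x hx
      obtain ⟨i, hi, rfl⟩ := Finset.mem_image.1 hx
      rw [Finset.mem_Icc] at hi
      calc Ω (z k + (i : Fin n)) ≤ Ω (z k + ((cycLen n K z k : ℕ) : Fin n)) :=
            hmono k i _ hi.1 hi.2 le_rfl
        _ = Ω (z (k + 1)) := by rw [hzL]
    · have hm := hmem k (cycLen n K z k) (hLpos k) le_rfl
      have h2 := Finset.le_sup' Ω hm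
      calc Ω (z (k + 1)) = Ω (z k + ((cycLen n K z k : ℕ) : Fin n)) :=
            (congrArg Ω (hzL k)).symm
        _ ≤ _ := h2
  have hinf : ∀ k : Fin (K+1),
      (cycle n K z k).inf' (cycle_nonempty n K z k) Ω = Ω (z k + 1) := by
    intro k
    have h1c : ((1 : ℕ) : Fin n) = (1 : Fin n) := Nat.cast_one
    apply le_antisymm
    · have hm := hmem k 1 le_rfl (hLpos k)
      have h2 := Finset.inf'_le Ω hm
      calc (cycle n K z k).inf' (cycle_nonempty n K z k) Ω
            ≤ Ω (z k + ((1 : ℕ) : Fin n)) := h2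
        _ = Ω (z k + 1) := by rw [h1c]
    · apply Finset.le_inf'
      intro x hx
      obtain ⟨i, hi, rfl⟩ := Finset.mem_image.1 hx
      rw [Finset.mem_Icc] at hi
      have := hmono k 1 i le_rfl hi.1 hi.2
      rwa [h1c] at this
  -- sum identities
  have hsumτβ : ∑ h : Fin n, τ h = ∑ h : Fin n, β h := by
    have ht : ∑ h : Fin n, (Ω h - Ω (h + 1) + τ h) = ∑ h : Fin n, β h :=
      Finset.sum_congr rfl (fun h _ => hstat h)
    have hΩ : ∑ h : Fin n, Ω (h + 1) = ∑ h : Fin n, Ω h :=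
      Fintype.sum_equiv (Equiv.addRight 1) _ _ (fun h => rfl)
    rw [Finset.sum_add_distrib, Finset.sum_sub_distrib, hΩ, sub_self, zero_add] at ht
    exact ht
  have hβsum : ∑ h : Fin n, β h = ∑ k : Fin (K+1), β (z k) := by
    have hinj : ∀ a ∈ Finset.univ, ∀ b ∈ Finset.univ, z a = z b → a = b :=
      fun a _ b _ h => hz_mono.injective h
    have himg : ∑ h ∈ Finset.univ.image z, β h = ∑ k : Fin (K+1), β (z k) :=
      Finset.sum_image hinj
    rw [← himg]
    symm
    apply Finset.sum_subset (Finset.subset_univ _)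
    intro h _ hh
    apply hβ0
    intro hs0
    obtain ⟨m, hm⟩ := (hz_enum h).1 hs0
    exact hh (Finset.mem_image.2 ⟨m, Finset.mem_univ m, hm⟩)
  have hβz : ∀ k : Fin (K+1), β (z k) = Ω (z k) - Ω (z k + 1) := by
    intro k
    have := hstat (z k)
    rw [hτz k] at this
    linarith
  have hΩz : ∑ k : Fin (K+1), Ω (z (k + 1)) = ∑ k : Fin (K+1), Ω (z k) :=
    Fintype.sum_equiv (Equiv.addRight 1) _ _ (fun k => rfl)
  have hthird : cu = ∑ k : Fin (K+1), (Ω (z (k + 1)) - Ω (z k + 1)) := by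
    rw [hcu, hsumτβ, hβsum]
    rw [Finset.sum_congr rfl (fun k _ => hβz k)]
    rw [Finset.sum_sub_distrib, Finset.sum_sub_distrib, hΩz]
  refine ⟨hmono, ?_, hthird⟩
  rw [hthird]
  apply Finset.sum_congr rfl
  intro k _
  rw [hsup k, hinf k]
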